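/- Let u be C² on the closure of the rectangle K = (x_i,x_{i+1}) × (t_j,t_{j+1}) with σ = f(u) for f ∈ C², and define the discrete divergence div_T f(u) at the midpoint of K by replacing the two boundary-edge integrals in the flux form of the average divergence with composite midpoint rules using n̂ subintervals in time and m̂ subintervals in space. Then for 1 ≤ p ≤ ∞, ‖div_T f(u) − avg_K div f(u)‖_{L^p(K)} ≤ C ( h^{1/p} δ² / n̂² · ‖σ_{tt}(x_{i+1},x_i;·)‖_{L^p(t_j,t_{j+1})} + h² δ^{1/p} / m̂² · ‖u_{xx}(·; t_{j+1}, t_j)‖_{L^p(x_i,x_{i+1})} ). -/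

import Mathlib

open MeasureTheory ENNReal

/-- Composite midpoint rule with `n` subintervals on `[c,d]`. -/
noncomputable def compMid (φ : ℝ → ℝ) (c d : ℝ) (n : ℕ) : ℝ :=
  ((d - c) / n) * ∑ i ∈ Finset.range n, φ (c + ((i : ℝ) + 1 / 2) * (d - c) / n)

open Set intervalIntegral

lemma ftc_cd {f f' : ℝ → ℝ} {c d a b : ℝ}
    (hf : ContinuousOn f (Icc c d))
    (hd : ∀ x ∈ Ioo c d, HasDerivAt f (f' x) x)
    (hf' : ContinuousOn f' (Icc c d))
    (ha : a ∈ Icc c d) (hb : b ∈ Icc c d) :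
    (∫ s in a..b, f' s) = f b - f a := by
  have key : ∀ x y : ℝ, x ∈ Icc c d → y ∈ Icc c d → x ≤ y →
      (∫ s in x..y, f' s) = f y - f x := by
    intro x y hx hy hxy
    apply integral_eq_sub_of_hasDeriv_right_of_le hxy
      (hf.mono (Icc_subset_Icc hx.1 hy.2))
    · intro z hz
      exact (hd z ⟨lt_of_le_of_lt hx.1 hz.1, lt_of_lt_of_le hz.2 hy.2⟩).hasDerivWithinAt
    · exact (hf'.mono (uIcc_subset_Icc hx hy)).intervalIntegrable
  rcases le_total a b with hab | hab
  · exact key a b ha hb hab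
  · rw [intervalIntegral.integral_symm, key b a hb ha hab]; ring

lemma per_interval {φ g1 g2 : ℝ → ℝ} {c d a b : ℝ}
    (hφ : ContinuousOn φ (Icc c d)) (hg1 : ContinuousOn g1 (Icc c d))
    (hg2 : ContinuousOn g2 (Icc c d))
    (hd1 : ∀ x ∈ Ioo c d, HasDerivAt φ (g1 x) x)
    (hd2 : ∀ x ∈ Ioo c d, HasDerivAt g1 (g2 x) x)
    (hca : c ≤ a) (hab : a < b) (hbd : b ≤ d) :
    |(∫ t in a..b, φ t) - (b - a) * φ ((a + b) / 2)| ≤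
      (b - a) ^ 2 / 2 * ∫ t in a..b, |g2 t| := by
  set m : ℝ := (a + b) / 2 with hm
  have hsub : Icc a b ⊆ Icc c d := Icc_subset_Icc hca hbd
  have hmab : m ∈ Icc a b := ⟨by rw [hm]; linarith, by rw [hm]; linarith⟩
  set J : ℝ := ∫ t in a..b, |g2 t| with hJ
  have hJ0 : 0 ≤ J := by
    rw [hJ]
    apply intervalIntegral.integral_nonneg hab.le
    intro t _; positivity
  have hg2i : IntervalIntegrable (fun t => |g2 t|) volume a b :=
    ((hg2.mono hsub).abs.mono (by rw [uIcc_of_le hab.le])).intervalIntegrable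
  -- difference bound for g1
  have hg1bd : ∀ s ∈ Icc a b, |g1 s - g1 m| ≤ J := by
    intro s hs
    have h1 : g1 s - g1 m = ∫ r in m..s, g2 r :=
      (ftc_cd hg1 hd2 hg2 (hsub hmab) (hsub hs)).symm
    rw [h1]
    calc |∫ r in m..s, g2 r| ≤ abs (∫ r in m..s, |g2 r|) := by
          simpa [Real.norm_eq_abs] using
            intervalIntegral.norm_integral_le_abs_integral_norm (f := g2) (a := m) (b := s)
      _ ≤ J := by
          rcases le_total m s with h | h
          · rw [abs_of_nonneg (intervalIntegral.integral_nonneg h (fun t _ => abs_nonneg _))]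
            exact intervalIntegral.integral_mono_interval hmab.1 h hs.2
              (Filter.Eventually.of_forall fun t => abs_nonneg _) hg2i
          · rw [intervalIntegral.integral_symm,
              abs_neg,
              abs_of_nonneg (intervalIntegral.integral_nonneg h (fun t _ => abs_nonneg _))]
            exact intervalIntegral.integral_mono_interval hs.1 h hmab.2
              (Filter.Eventually.of_forall fun t => abs_nonneg _) hg2i
  -- Taylor bound
  have key : ∀ t ∈ Icc a b, |φ t - φ m - g1 m * (t - m)| ≤ (b - a) / 2 * J := by
    intro t ht
    have h1 : φ t - φ m = ∫ s in m..t, g1 s :=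
      (ftc_cd hφ hd1 hg1 (hsub hmab) (hsub ht)).symm
    have h2 : g1 m * (t - m) = ∫ s in m..t, g1 m := by
      rw [intervalIntegral.integral_const, smul_eq_mul]; ring
    have hg1int : IntervalIntegrable g1 volume m t :=
      ((hg1.mono hsub).mono (uIcc_subset_Icc hmab ht)).intervalIntegrable
    have h3 : φ t - φ m - g1 m * (t - m) = ∫ s in m..t, (g1 s - g1 m) := by
      rw [h1, h2, intervalIntegral.integral_sub hg1int intervalIntegrable_const]
    rw [h3]
    have hb1 : ∀ s ∈ Set.uIoc m t, ‖g1 s - g1 m‖ ≤ J := by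
      intro s hs
      have hs' : s ∈ Icc a b := uIcc_subset_Icc hmab ht (uIoc_subset_uIcc hs)
      rw [Real.norm_eq_abs]
      exact hg1bd s hs'
    have h4 := intervalIntegral.norm_integral_le_of_norm_le_const (C := J) hb1
    rw [Real.norm_eq_abs] at h4
    refine h4.trans ?_
    have htm : |t - m| ≤ (b - a) / 2 := by
      rw [abs_le, hm]; constructor <;> [linarith [ht.1]; linarith [ht.2]]
    calc J * |t - m| ≤ J * ((b - a) / 2) := by
          exact mul_le_mul_of_nonneg_left htm hJ0
      _ = (b - a) / 2 * J := by ring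
  -- assemble
  have hφi : IntervalIntegrable φ volume a b :=
    ((hφ.mono hsub).mono (by rw [uIcc_of_le hab.le])).intervalIntegrable
  have hlin : IntervalIntegrable (fun t => g1 m * (t - m)) volume a b :=
    (Continuous.intervalIntegrable (by continuity) a b)
  have hzero : (∫ t in a..b, (t - m)) = 0 := by
    rw [intervalIntegral.integral_sub intervalIntegrable_id intervalIntegrable_const,
      integral_id, intervalIntegral.integral_const, smul_eq_mul, hm]
    ring
  have hrepr : (∫ t in a..b, φ t) - (b - a) * φ m
      = ∫ t in a..b, (φ t - φ m - g1 m * (t - m)) := by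
    rw [intervalIntegral.integral_sub (hφi.sub intervalIntegrable_const) hlin,
      intervalIntegral.integral_sub hφi intervalIntegrable_const,
      intervalIntegral.integral_const_mul, hzero, intervalIntegral.integral_const,
      smul_eq_mul]
    ring
  rw [hrepr]
  have h5 := intervalIntegral.norm_integral_le_of_norm_le_const
    (C := (b - a) / 2 * J) (f := fun t => φ t - φ m - g1 m * (t - m)) (a := a) (b := b)
    (fun t htt => key t (Ioc_subset_Icc_self (by rwa [Set.uIoc_of_le hab.le] at htt)))
  rw [Real.norm_eq_abs] at h5
  refine h5.trans (le_of_eq ?_)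
  rw [abs_of_pos (by linarith : (0:ℝ) < b - a)]
  ring

lemma compMid_error {φ g1 g2 : ℝ → ℝ} {c d : ℝ} (hcd : c < d)
    (hφ : ContinuousOn φ (Icc c d)) (hg1 : ContinuousOn g1 (Icc c d))
    (hg2 : ContinuousOn g2 (Icc c d))
    (hd1 : ∀ x ∈ Ioo c d, HasDerivAt φ (g1 x) x)
    (hd2 : ∀ x ∈ Ioo c d, HasDerivAt g1 (g2 x) x)
    {n : ℕ} (hn : 0 < n) :
    |(∫ t in c..d, φ t) - compMid φ c d n| ≤
      ((d - c) / n) ^ 2 / 2 * ∫ t in c..d, |g2 t| := by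
  have hn' : (0:ℝ) < n := Nat.cast_pos.2 hn
  set w : ℝ := (d - c) / n with hw
  have hw0 : 0 < w := div_pos (by linarith) hn'
  set a : ℕ → ℝ := fun i => c + i * w with ha
  have haval : ∀ i : ℕ, a i = c + i * w := fun i => rfl
  have ha0 : a 0 = c := by simp [ha]
  have han : a n = d := by
    simp only [ha, hw]; field_simp; ring
  have hmem : ∀ i : ℕ, i ≤ n → a i ∈ Icc c d := by
    intro i hi
    constructor
    · simp only [ha]; nlinarith [hw0.le, Nat.cast_nonneg (α := ℝ) i]
    · simp only [ha, hw]
      have h1 : (i:ℝ) ≤ n := Nat.cast_le.2 hi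
      have h2 : (i:ℝ) * ((d - c)/n) ≤ n * ((d - c)/n) :=
        mul_le_mul_of_nonneg_right h1 (by positivity)
      have h3 : (n:ℝ) * ((d - c)/n) = d - c := by field_simp
      linarith
  have hstep : ∀ i : ℕ, a (i+1) - a i = w := by
    intro i; simp only [ha]; push_cast; ring
  have hasucc : ∀ i : ℕ, a i < a (i+1) := by
    intro i; have := hstep i; linarith
  have hint : ∀ (f : ℝ → ℝ), ContinuousOn f (Icc c d) →
      ∀ k < n, IntervalIntegrable f volume (a k) (a (k+1)) := by
    intro f hf k hk
    apply ContinuousOn.intervalIntegrable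
    apply hf.mono
    rw [uIcc_of_le (hasucc k).le]
    exact Icc_subset_Icc (hmem k hk.le).1 (hmem (k+1) hk).2
  have hsum1 : ∑ i ∈ Finset.range n, ∫ t in a i..a (i+1), φ t = ∫ t in c..d, φ t := by
    rw [intervalIntegral.sum_integral_adjacent_intervals (hint φ hφ), ha0, han]
  have hsum2 : ∑ i ∈ Finset.range n, ∫ t in a i..a (i+1), |g2 t| =
      ∫ t in c..d, |g2 t| := by
    rw [intervalIntegral.sum_integral_adjacent_intervals (hint _ hg2.abs), ha0, han]
  have hcomp : compMid φ c d n = ∑ i ∈ Finset.range n, w * φ ((a i + a (i+1)) / 2) := by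
    rw [compMid, Finset.mul_sum]
    apply Finset.sum_congr rfl
    intro i _
    rw [← hw]
    congr 1
    simp only [ha, hw]; push_cast; ring
  rw [hcomp, ← hsum1, ← Finset.sum_sub_distrib]
  calc |∑ i ∈ Finset.range n, ((∫ t in a i..a (i+1), φ t) - w * φ ((a i + a (i+1)) / 2))|
      ≤ ∑ i ∈ Finset.range n, |(∫ t in a i..a (i+1), φ t) - w * φ ((a i + a (i+1)) / 2)| :=
        Finset.abs_sum_le_sum_abs _ _
    _ ≤ ∑ i ∈ Finset.range n, w ^ 2 / 2 * ∫ t in a i..a (i+1), |g2 t| := by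
        apply Finset.sum_le_sum
        intro i hi
        have hi' := Finset.mem_range.1 hi
        have := per_interval hφ hg1 hg2 hd1 hd2 (hmem i hi'.le).1 (hasucc i)
          (hmem (i+1) hi').2
        rwa [hstep i] at this
    _ = w ^ 2 / 2 * ∫ t in c..d, |g2 t| := by
        rw [← Finset.mul_sum, hsum2]

open ENNReal in
lemma holder_step {g2 G : ℝ → ℝ} {c d : ℝ} (hcd : c < d)
    (hg2 : ContinuousOn g2 (Icc c d))
    (hG : ∀ x ∈ Ioo c d, G x = g2 x)
    (hGm : AEStronglyMeasurable G (volume.restrict (Ioo c d)))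
    {p : ℝ≥0∞} (hp : 1 ≤ p) :
    (∫ t in c..d, |g2 t|) ≤
      (d - c) ^ (1 - (1/p).toReal) *
        (eLpNorm G p (volume.restrict (Ioo c d))).toReal := by
  set μ := volume.restrict (Ioo c d) with hμ
  have hGae : G =ᵐ[μ] g2 := by
    rw [hμ]
    exact (ae_restrict_iff' measurableSet_Ioo).2 (Filter.Eventually.of_forall hG)
  -- bound on g2
  obtain ⟨M, hM⟩ := (isCompact_Icc (a := c) (b := d)).exists_bound_of_continuousOn hg2
  have hGbd : ∀ᵐ x ∂μ, ‖G x‖ ≤ M := by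
    rw [hμ, ae_restrict_iff' measurableSet_Ioo]
    exact Filter.Eventually.of_forall fun x hx => by
      rw [Real.norm_eq_abs, hG x hx]
      simpa [Real.norm_eq_abs] using hM x (Ioo_subset_Icc_self hx)
  have hμuniv : μ Set.univ = ENNReal.ofReal (d - c) := by
    rw [hμ, Measure.restrict_apply_univ, Real.volume_Ioo]
  have hfin : eLpNorm G p μ < ⊤ := by
    refine lt_of_le_of_lt (eLpNorm_le_of_ae_bound hGbd) ?_
    rw [hμuniv]
    exact ENNReal.mul_lt_top (ENNReal.rpow_lt_top_of_nonneg (by positivity) ofReal_ne_top)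
      ofReal_lt_top
  -- integrability of G
  have hGint : Integrable G μ := by
    refine Integrable.congr ?_ hGae.symm
    rw [hμ]
    exact (hg2.integrableOn_compact isCompact_Icc).mono_set Ioo_subset_Icc_self
  -- rewrite interval integral as an integral over μ
  have step1 : (∫ t in c..d, |g2 t|) = ∫ t, ‖G t‖ ∂μ := by
    rw [intervalIntegral.integral_of_le hcd.le, integral_Ioc_eq_integral_Ioo, hμ]
    refine (setIntegral_congr_fun measurableSet_Ioo fun x hx => ?_).symm
    rw [Real.norm_eq_abs, hG x hx]
  have step2 : (∫ t, ‖G t‖ ∂μ) = (eLpNorm G 1 μ).toReal := by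
    rw [integral_norm_eq_lintegral_enorm hGm, eLpNorm_one_eq_lintegral_enorm]
  have step3 : eLpNorm G 1 μ ≤ eLpNorm G p μ *
      μ Set.univ ^ (1 / (1:ℝ≥0∞).toReal - 1 / p.toReal) :=
    eLpNorm_le_eLpNorm_mul_rpow_measure_univ hp hGm
  have hexp : (1 / (1:ℝ≥0∞).toReal - 1 / p.toReal) = 1 - (1/p).toReal := by
    simp [ENNReal.toReal_inv, one_div]
  have hexp0 : 0 ≤ 1 - (1/p).toReal := by
    rcases eq_or_ne p ⊤ with hpt | hpt
    · simp [hpt]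
    · have hp1 : (1:ℝ) ≤ p.toReal := by
        rw [← ENNReal.toReal_one]
        exact ENNReal.toReal_mono hpt hp
      have : (1/p).toReal = (p.toReal)⁻¹ := by rw [one_div, ENNReal.toReal_inv]
      rw [this]
      have : (p.toReal)⁻¹ ≤ 1 := by
        rw [inv_le_one_iff₀]; right; linarith
      linarith
  have hfin2 : eLpNorm G p μ * μ Set.univ ^ (1 - (1/p).toReal) < ⊤ := by
    apply ENNReal.mul_lt_top hfin
    rw [hμuniv]
    exact ENNReal.rpow_lt_top_of_nonneg hexp0 ofReal_ne_top
  rw [step1, step2]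
  have step4 : (eLpNorm G 1 μ).toReal ≤
      (eLpNorm G p μ * μ Set.univ ^ (1 - (1/p).toReal)).toReal := by
    apply ENNReal.toReal_mono hfin2.ne
    rw [← hexp]; exact step3
  refine step4.trans (le_of_eq ?_)
  rw [ENNReal.toReal_mul, hμuniv, ← ENNReal.toReal_rpow,
    ENNReal.toReal_ofReal (by linarith : (0:ℝ) ≤ d - c)]
  ring

open ENNReal in
lemma dir_bound {φ : ℝ → ℝ} {c d : ℝ} (hcd : c < d)
    (hφ : ContDiffOn ℝ 2 φ (Icc c d)) {n : ℕ} (hn : 0 < n)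
    {p : ℝ≥0∞} (hp : 1 ≤ p) :
    |(∫ t in c..d, φ t) - compMid φ c d n| ≤
      ((d - c) / n) ^ 2 * ((d - c) ^ (1 - (1/p).toReal) *
        (eLpNorm (deriv (deriv φ)) p (volume.restrict (Ioo c d))).toReal) := by
  have hu : UniqueDiffOn ℝ (Icc c d) := uniqueDiffOn_Icc hcd
  set g1 : ℝ → ℝ := derivWithin φ (Icc c d) with hg1def
  set g2 : ℝ → ℝ := derivWithin g1 (Icc c d) with hg2def
  have hφ1 : ContDiffOn ℝ 1 g1 (Icc c d) := hφ.derivWithin hu (by norm_num : (1:WithTop ℕ∞) + 1 ≤ 2)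
  have hg1c : ContinuousOn g1 (Icc c d) := hφ1.continuousOn
  have hg2c : ContinuousOn g2 (Icc c d) := hφ1.continuousOn_derivWithin hu (by norm_num)
  have hd1 : ∀ x ∈ Ioo c d, HasDerivAt φ (g1 x) x := by
    intro x hx
    have hnh : Icc c d ∈ nhds x := Icc_mem_nhds hx.1 hx.2
    have hdx : DifferentiableAt ℝ φ x :=
      ((hφ.differentiableOn (by norm_num) x (Ioo_subset_Icc_self hx)).differentiableAt hnh)
    have : g1 x = deriv φ x := by rw [hg1def, derivWithin_of_mem_nhds hnh]
    rw [this]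
    exact hdx.hasDerivAt
  have hd2 : ∀ x ∈ Ioo c d, HasDerivAt g1 (g2 x) x := by
    intro x hx
    have hnh : Icc c d ∈ nhds x := Icc_mem_nhds hx.1 hx.2
    have hdx : DifferentiableAt ℝ g1 x :=
      ((hφ1.differentiableOn (by norm_num) x (Ioo_subset_Icc_self hx)).differentiableAt hnh)
    have : g2 x = deriv g1 x := by rw [hg2def, derivWithin_of_mem_nhds hnh]
    rw [this]
    exact hdx.hasDerivAt
  have key : ∀ x ∈ Ioo c d, deriv (deriv φ) x = g2 x := by
    intro x hx
    have heq : deriv φ =ᶠ[nhds x] g1 :=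
      Filter.eventually_of_mem (isOpen_Ioo.mem_nhds hx) fun y hy => (hd1 y hy).deriv
    rw [heq.deriv_eq, (hd2 x hx).deriv]
  have hmeas : AEStronglyMeasurable (deriv (deriv φ)) (volume.restrict (Ioo c d)) :=
    (measurable_deriv _).aestronglyMeasurable
  have h1 := compMid_error hcd hφ.continuousOn hg1c hg2c hd1 hd2 hn
  have h2 := holder_step hcd hg2c key hmeas hp
  refine h1.trans ?_
  have hw2 : (0:ℝ) ≤ ((d - c) / n) ^ 2 := sq_nonneg _
  have hH : (0:ℝ) ≤ (d - c) ^ (1 - (1/p).toReal) *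
      (eLpNorm (deriv (deriv φ)) p (volume.restrict (Ioo c d))).toReal := by
    have hdc : (0:ℝ) ≤ d - c := by linarith
    exact mul_nonneg (Real.rpow_nonneg hdc _) ENNReal.toReal_nonneg
  calc ((d - c) / n) ^ 2 / 2 * ∫ t in c..d, |g2 t|
      ≤ ((d - c) / n) ^ 2 / 2 * ((d - c) ^ (1 - (1/p).toReal) *
          (eLpNorm (deriv (deriv φ)) p (volume.restrict (Ioo c d))).toReal) := by
        have hw2half : (0:ℝ) ≤ ((d - c) / n) ^ 2 / 2 := by positivity
        exact mul_le_mul_of_nonneg_left h2 hw2half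
    _ ≤ _ := by nlinarith [mul_nonneg hw2 hH]


/-- Error of the composite-midpoint discrete divergence operator on a rectangle
for a `C²` solution `u` and `C²` flux `f` (with `σ = f(u)`):
`‖div_T f(u) − avg_K div f(u)‖_{L^p(K)}
  ≤ C ( h^{1/p} δ²/n̂² ‖σ_{tt}‖_{L^p(t_j,t_{j+1})} + h² δ^{1/p}/m̂² ‖u_{xx}‖_{L^p(x_i,x_{i+1})} )`. -/
theorem discrete_div_error_smooth (p : ℝ≥0∞) (hp : 1 ≤ p) :
    ∃ C > (0 : ℝ), ∀ (f : ℝ → ℝ), ContDiff ℝ 2 f →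
      ∀ (u : ℝ → ℝ → ℝ) (xi xi1 tj tj1 : ℝ), xi < xi1 → tj < tj1 →
      ContDiffOn ℝ 2 (fun z : ℝ × ℝ => u z.1 z.2) (Set.Icc xi xi1 ×ˢ Set.Icc tj tj1) →
      ∀ (mhat nhat : ℕ), 0 < mhat → 0 < nhat →
      let h := xi1 - xi
      let δ := tj1 - tj
      let σq : ℝ → ℝ := fun t => (f (u xi1 t) - f (u xi t)) / h
      let uq : ℝ → ℝ := fun x => (u x tj1 - u x tj) / δ
      let divT : ℝ := δ⁻¹ * compMid σq tj tj1 nhat + h⁻¹ * compMid uq xi xi1 mhat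
      let avgK : ℝ := δ⁻¹ * (∫ t in tj..tj1, σq t) + h⁻¹ * (∫ x in xi..xi1, uq x)
      |divT - avgK| * (h * δ) ^ ((1 / p).toReal) ≤
        C * (h ^ ((1 / p).toReal) * δ ^ 2 / (nhat : ℝ) ^ 2 *
              (eLpNorm (deriv (deriv σq)) p (volume.restrict (Set.Ioo tj tj1))).toReal
          + h ^ 2 * δ ^ ((1 / p).toReal) / (mhat : ℝ) ^ 2 *
              (eLpNorm (deriv (deriv uq)) p (volume.restrict (Set.Ioo xi xi1))).toReal) := by
  refine ⟨1, one_pos, ?_⟩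
  intro f hf u xi xi1 tj tj1 hx ht hu mhat nhat hm hn
  intro h δ σq uq divT avgK
  have hδdef0 : tj1 - tj = δ := rfl
  have hhdef0 : xi1 - xi = h := rfl
  have hdivT : divT = δ⁻¹ * compMid σq tj tj1 nhat + h⁻¹ * compMid uq xi xi1 mhat := rfl
  have havgK : avgK = δ⁻¹ * (∫ t in tj..tj1, σq t) + h⁻¹ * (∫ x in xi..xi1, uq x) := rfl
  have hh : (0:ℝ) < h := sub_pos.2 hx
  have hδ : (0:ℝ) < δ := sub_pos.2 ht
  have hm' : (0:ℝ) < mhat := Nat.cast_pos.2 hm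
  have hn' : (0:ℝ) < nhat := Nat.cast_pos.2 hn
  have hline : ∀ a ∈ Icc xi xi1, ContDiffOn ℝ 2 (fun t => u a t) (Icc tj tj1) := by
    intro a ha
    exact hu.comp ((contDiff_const.prodMk contDiff_id).contDiffOn) (fun t htt => ⟨ha, htt⟩)
  have hline2 : ∀ b ∈ Icc tj tj1, ContDiffOn ℝ 2 (fun x => u x b) (Icc xi xi1) := by
    intro b hb
    exact hu.comp ((contDiff_id.prodMk contDiff_const).contDiffOn) (fun x hxx => ⟨hxx, hb⟩)
  have hσ : ContDiffOn ℝ 2 σq (Icc tj tj1) :=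
    (((hf.comp_contDiffOn (hline xi1 (right_mem_Icc.2 hx.le))).sub
      (hf.comp_contDiffOn (hline xi (left_mem_Icc.2 hx.le)))).div_const h)
  have huq : ContDiffOn ℝ 2 uq (Icc xi xi1) :=
    ((hline2 tj1 (right_mem_Icc.2 ht.le)).sub (hline2 tj (left_mem_Icc.2 ht.le))).div_const δ
  clear_value divT avgK
  have E1 := dir_bound ht hσ hn hp
  have E2 := dir_bound hx huq hm hp
  set e := (1/p).toReal with he
  set Nσ := (eLpNorm (deriv (deriv σq)) p (volume.restrict (Set.Ioo tj tj1))).toReal with hNσ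
  set Nu := (eLpNorm (deriv (deriv uq)) p (volume.restrict (Set.Ioo xi xi1))).toReal with hNu
  have hNσ0 : 0 ≤ Nσ := ENNReal.toReal_nonneg
  have hNu0 : 0 ≤ Nu := ENNReal.toReal_nonneg
  rw [hδdef0] at E1
  rw [hhdef0] at E2
  clear_value σq uq h δ
  have hsplit : divT - avgK =
      δ⁻¹ * (compMid σq tj tj1 nhat - ∫ t in tj..tj1, σq t) +
      h⁻¹ * (compMid uq xi xi1 mhat - ∫ x in xi..xi1, uq x) := by
    rw [hdivT, havgK]; ring
  have habs : |divT - avgK| ≤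
      δ⁻¹ * |(∫ t in tj..tj1, σq t) - compMid σq tj tj1 nhat| +
      h⁻¹ * |(∫ x in xi..xi1, uq x) - compMid uq xi xi1 mhat| := by
    rw [hsplit]
    refine (abs_add_le _ _).trans ?_
    rw [abs_mul, abs_mul, abs_of_pos (inv_pos.2 hδ), abs_of_pos (inv_pos.2 hh),
      abs_sub_comm (compMid σq tj tj1 nhat), abs_sub_comm (compMid uq xi xi1 mhat)]
  have hP0 : (0:ℝ) ≤ (h * δ) ^ e := Real.rpow_nonneg (by positivity) e
  calc |divT - avgK| * (h * δ) ^ e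
      ≤ (δ⁻¹ * |(∫ t in tj..tj1, σq t) - compMid σq tj tj1 nhat| +
         h⁻¹ * |(∫ x in xi..xi1, uq x) - compMid uq xi xi1 mhat|) * (h * δ) ^ e :=
        mul_le_mul_of_nonneg_right habs hP0
    _ ≤ (δ⁻¹ * ((δ / nhat) ^ 2 * (δ ^ (1 - e) * Nσ)) +
         h⁻¹ * ((h / mhat) ^ 2 * (h ^ (1 - e) * Nu))) * (h * δ) ^ e := by
        have hgoal := add_le_add
          (mul_le_mul_of_nonneg_left E1 (inv_nonneg.2 hδ.le))
          (mul_le_mul_of_nonneg_left E2 (inv_nonneg.2 hh.le))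
        exact mul_le_mul_of_nonneg_right hgoal hP0
    _ = 1 * (h ^ e * δ ^ 2 / (nhat:ℝ) ^ 2 * Nσ + h ^ 2 * δ ^ e / (mhat:ℝ) ^ 2 * Nu) := by
        have hδe : δ ^ (1 - e) * δ ^ e = δ := by
          rw [← Real.rpow_add hδ]; norm_num
        have hhe : h ^ (1 - e) * h ^ e = h := by
          rw [← Real.rpow_add hh]; norm_num
        have hmulr : (h * δ) ^ e = h ^ e * δ ^ e := Real.mul_rpow hh.le hδ.le
        rw [hmulr]
        have expand : (δ⁻¹ * ((δ / nhat) ^ 2 * (δ ^ (1 - e) * Nσ)) +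
            h⁻¹ * ((h / mhat) ^ 2 * (h ^ (1 - e) * Nu))) * (h ^ e * δ ^ e)
            = (δ⁻¹ * δ) * ((δ ^ (1 - e) * δ ^ e) * δ / (nhat:ℝ) ^ 2) * Nσ * h ^ e
              + (h⁻¹ * h) * ((h ^ (1 - e) * h ^ e) * h / (mhat:ℝ) ^ 2) * Nu * δ ^ e := by
          ring
        rw [expand, hδe, hhe, inv_mul_cancel₀ hδ.ne', inv_mul_cancel₀ hh.ne']
        ring
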